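/- For any open-loop policy {π_t} with state sequence ρ_{t+1} = N(ρ_t ⊗ π_t), the state-action occupation operator σ = (1−β) Σ_{t≥0} β^t (ρ_t ⊗ π_t) satisfies Tr_A(σ) − β N(σ) = (1−β) ρ₀. -/

import Mathlib

open Matrix
open scoped Kronecker ComplexOrder

noncomputable section

/-- A density operator: positive semidefinite with unit trace. -/
def IsDensity {n : Type*} [Fintype n] (ρ : Matrix n n ℂ) : Prop :=
  ρ.PosSemidef ∧ ρ.trace = 1

/-- Partial trace over the second tensor factor. -/
def ptraceA {X A : Type*} [Fintype A] (M : Matrix (X × A) (X × A) ℂ) :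
    Matrix X X ℂ :=
  Matrix.of fun x y => ∑ a, M (x, a) (y, a)

/-- A quantum channel given by a Kraus representation. -/
structure KrausChannel (d₁ d₂ : Type*) [Fintype d₁] [DecidableEq d₁] [Fintype d₂] where
  ι : Type
  [fin : Fintype ι]
  K : ι → Matrix d₂ d₁ ℂ
  sum_eq_one : ∑ l : ι, (K l)ᴴ * K l = 1

attribute [instance] KrausChannel.fin

/-- The action of a Kraus channel on operators. -/
def KrausChannel.apply {d₁ d₂ : Type*} [Fintype d₁] [DecidableEq d₁] [Fintype d₂]
    (C : KrausChannel d₁ d₂) (σ : Matrix d₁ d₁ ℂ) : Matrix d₂ d₂ ℂ :=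
  ∑ l : C.ι, C.K l * σ * (C.K l)ᴴ

/-- The state sequence generated by an open-loop policy `π` from `ρ0`. -/
def stateSeq {X A : Type*} [Fintype X] [DecidableEq X] [Fintype A] [DecidableEq A]
    (N : KrausChannel (X × A) X) (ρ0 : Matrix X X ℂ) (π : ℕ → Matrix A A ℂ) :
    ℕ → Matrix X X ℂ
  | 0 => ρ0
  | t + 1 => N.apply (stateSeq N ρ0 π t ⊗ₖ π t)

/-! ### Auxiliary lemmas -/

section
open scoped MatrixOrder

lemma posSemidef_iff_eq_transpose_mul_self' {n : Type*} [Fintype n] {M : Matrix n n ℂ} :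
    M.PosSemidef ↔ ∃ B : Matrix n n ℂ, M = Bᴴ * B := by
  classical
  refine ⟨fun hM => ?_, fun ⟨B, hB⟩ => hB ▸ posSemidef_conjTranspose_mul_self B⟩
  obtain ⟨B, hB⟩ := CStarAlgebra.nonneg_iff_eq_star_mul_self.mp hM.nonneg
  exact ⟨B, hB⟩

end

attribute [local instance] Matrix.normedAddCommGroup Matrix.normedSpace

lemma conjTranspose_kron {l m n p : Type*} (A : Matrix l m ℂ) (B : Matrix n p ℂ) :
    (A ⊗ₖ B)ᴴ = Aᴴ ⊗ₖ Bᴴ := by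
  ext ⟨i, j⟩ ⟨k, u⟩
  simp [Matrix.conjTranspose_apply, Matrix.kroneckerMap_apply, mul_comm]

lemma posSemidef_kron {m n : Type*} [Fintype m] [Fintype n]
    {M : Matrix m m ℂ} {P : Matrix n n ℂ} (hM : M.PosSemidef) (hP : P.PosSemidef) :
    (M ⊗ₖ P).PosSemidef := by
  obtain ⟨B, rfl⟩ := posSemidef_iff_eq_transpose_mul_self'.mp hM
  obtain ⟨C, rfl⟩ := posSemidef_iff_eq_transpose_mul_self'.mp hP
  rw [Matrix.mul_kronecker_mul, ← conjTranspose_kron]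
  exact Matrix.posSemidef_conjTranspose_mul_self _

lemma isDensity_kron {m n : Type*} [Fintype m] [Fintype n]
    {M : Matrix m m ℂ} {P : Matrix n n ℂ} (hM : IsDensity M) (hP : IsDensity P) :
    IsDensity (M ⊗ₖ P) := by
  refine ⟨posSemidef_kron hM.1 hP.1, ?_⟩
  rw [Matrix.trace_kronecker, hM.2, hP.2, one_mul]

lemma posSemidef_apply {d₁ d₂ : Type*} [Fintype d₁] [DecidableEq d₁] [Fintype d₂]
    (C : KrausChannel d₁ d₂) {σ : Matrix d₁ d₁ ℂ} (hσ : σ.PosSemidef) :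
    (C.apply σ).PosSemidef := by
  unfold KrausChannel.apply
  classical
  refine Finset.sum_induction _ _ (fun a b ha hb => ha.add hb) Matrix.PosSemidef.zero ?_
  intro l _
  exact hσ.mul_mul_conjTranspose_same (C.K l)

lemma trace_apply {d₁ d₂ : Type*} [Fintype d₁] [DecidableEq d₁] [Fintype d₂]
    (C : KrausChannel d₁ d₂) (σ : Matrix d₁ d₁ ℂ) :
    (C.apply σ).trace = σ.trace := by
  unfold KrausChannel.apply
  rw [Matrix.trace_sum]
  have : ∀ l : C.ι, (C.K l * σ * (C.K l)ᴴ).trace = ((C.K l)ᴴ * C.K l * σ).trace := by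
    intro l
    rw [Matrix.trace_mul_cycle]
  simp_rw [this, ← Matrix.trace_sum, ← Finset.sum_mul, C.sum_eq_one, Matrix.one_mul]

lemma isDensity_apply {d₁ d₂ : Type*} [Fintype d₁] [DecidableEq d₁] [Fintype d₂]
    (C : KrausChannel d₁ d₂) {σ : Matrix d₁ d₁ ℂ} (hσ : IsDensity σ) :
    IsDensity (C.apply σ) :=
  ⟨posSemidef_apply C hσ.1, by rw [trace_apply, hσ.2]⟩

lemma isDensity_stateSeq {X A : Type*} [Fintype X] [DecidableEq X]
    [Fintype A] [DecidableEq A]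
    (N : KrausChannel (X × A) X) (ρ0 : Matrix X X ℂ) (hρ0 : IsDensity ρ0)
    (π : ℕ → Matrix A A ℂ) (hπ : ∀ t, IsDensity (π t)) :
    ∀ t, IsDensity (stateSeq N ρ0 π t) := by
  intro t
  induction t with
  | zero => exact hρ0
  | succ t ih => exact isDensity_apply N (isDensity_kron ih (hπ t))

/-- Diagonal entries of a density matrix, entrywise data. -/
lemma density_entry_bound {n : Type*} [Fintype n] {M : Matrix n n ℂ}
    (hM : IsDensity M) (x y : n) : ‖M x y‖ ≤ 1 := by
  obtain ⟨B, hB⟩ := posSemidef_iff_eq_transpose_mul_self'.mp hM.1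
  have key : ∀ w : ℂ, star w * w = ((‖w‖ : ℂ)) ^ 2 := by
    intro w
    rw [Complex.star_def, mul_comm, Complex.mul_conj]
    simp [Complex.normSq_eq_norm_sq]
  have hdiag : ∀ z : n, M z z = ((∑ k, ‖B k z‖ ^ 2 : ℝ) : ℂ) := by
    intro z
    rw [hB]
    simp only [Matrix.mul_apply, Matrix.conjTranspose_apply, Complex.ofReal_sum,
      Complex.ofReal_pow]
    exact Finset.sum_congr rfl fun k _ => key _
  have htr : (∑ z, ∑ k, ‖B k z‖ ^ 2 : ℝ) = 1 := by
    have h1 := hM.2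
    rw [Matrix.trace] at h1
    simp only [Matrix.diag_apply] at h1
    rw [show (∑ z, M z z) = ((∑ z, ∑ k, ‖B k z‖ ^ 2 : ℝ) : ℂ) by
      rw [Complex.ofReal_sum]; exact Finset.sum_congr rfl fun z _ => hdiag z] at h1
    exact_mod_cast h1
  have hle : ∀ z : n, (∑ k, ‖B k z‖ ^ 2 : ℝ) ≤ 1 := by
    intro z
    rw [← htr]
    exact Finset.single_le_sum (f := fun z => ∑ k, ‖B k z‖ ^ 2)
      (fun i _ => Finset.sum_nonneg fun k _ => sq_nonneg _) (Finset.mem_univ z)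
  have hentry : ‖M x y‖ ≤ ∑ k, ‖B k x‖ * ‖B k y‖ := by
    rw [hB]
    simp only [Matrix.mul_apply, Matrix.conjTranspose_apply]
    refine le_trans (norm_sum_le _ _) (le_of_eq ?_)
    congr 1; ext k; rw [norm_mul, norm_star]
  refine hentry.trans ?_
  have hcs := Finset.sum_mul_sq_le_sq_mul_sq Finset.univ
    (fun k => ‖B k x‖) (fun k => ‖B k y‖)
  have hnn : (0 : ℝ) ≤ ∑ k, ‖B k x‖ * ‖B k y‖ :=
    Finset.sum_nonneg fun k _ => mul_nonneg (norm_nonneg _) (norm_nonneg _)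
  have ha : (0:ℝ) ≤ ∑ k, ‖B k x‖ ^ 2 := Finset.sum_nonneg fun k _ => sq_nonneg _
  have hb : (0:ℝ) ≤ ∑ k, ‖B k y‖ ^ 2 := Finset.sum_nonneg fun k _ => sq_nonneg _
  nlinarith [hle x, hle y, hcs, hnn, ha, hb]

lemma density_norm_le_one {n : Type*} [Fintype n] {M : Matrix n n ℂ}
    (hM : IsDensity M) : ‖M‖ ≤ 1 :=
  (Matrix.norm_le_iff zero_le_one).2 fun x y => density_entry_bound hM x y

lemma ptraceA_kron {X A : Type*} [Fintype X] [Fintype A]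
    (ρ : Matrix X X ℂ) (π : Matrix A A ℂ) :
    ptraceA (ρ ⊗ₖ π) = π.trace • ρ := by
  ext x y
  simp only [ptraceA, Matrix.of_apply, Matrix.kroneckerMap_apply, Matrix.smul_apply,
    Matrix.trace, Matrix.diag_apply, smul_eq_mul, ← Finset.mul_sum]
  ring

/-- `ptraceA` as an `ℝ`-linear map. -/
def ptraceALM (X A : Type*) [Fintype X] [Fintype A] :
    Matrix (X × A) (X × A) ℂ →ₗ[ℝ] Matrix X X ℂ where
  toFun := ptraceA
  map_add' M P := by ext x y; simp [ptraceA, Finset.sum_add_distrib]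
  map_smul' c M := by ext x y; simp [ptraceA, Finset.smul_sum]

/-- A Kraus channel's action as an `ℝ`-linear map. -/
def applyLM {d₁ d₂ : Type*} [Fintype d₁] [DecidableEq d₁] [Fintype d₂]
    (C : KrausChannel d₁ d₂) : Matrix d₁ d₁ ℂ →ₗ[ℝ] Matrix d₂ d₂ ℂ where
  toFun := C.apply
  map_add' M P := by
    simp [KrausChannel.apply, Matrix.mul_add, Matrix.add_mul, Finset.sum_add_distrib]
  map_smul' c M := by
    simp [KrausChannel.apply, Matrix.mul_smul, Matrix.smul_mul, Finset.smul_sum]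

/-- The state-action occupation operator
`σ = (1−β) ∑ β^t (ρ_t ⊗ π_t)` of an open-loop policy satisfies
`Tr_A σ − β N(σ) = (1−β) ρ₀`. -/
theorem occupation_constraint_open_loop {X A : Type*} [Fintype X] [DecidableEq X]
    [Fintype A] [DecidableEq A]
    (N : KrausChannel (X × A) X) (β : ℝ) (hβ0 : 0 ≤ β) (hβ1 : β < 1)
    (ρ0 : Matrix X X ℂ) (hρ0 : IsDensity ρ0)
    (π : ℕ → Matrix A A ℂ) (hπ : ∀ t, IsDensity (π t))
    (σ : Matrix (X × A) (X × A) ℂ)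
    (hσ : σ = (1 - β) • ∑' t : ℕ, β ^ t • (stateSeq N ρ0 π t ⊗ₖ π t)) :
    ptraceA σ - β • N.apply σ = (1 - β) • ρ0 := by
  set ρ := stateSeq N ρ0 π with hρ
  have hρd : ∀ t, IsDensity (ρ t) := isDensity_stateSeq N ρ0 hρ0 π hπ
  -- summability
  have hgeom : Summable (fun t : ℕ => β ^ t) := summable_geometric_of_lt_one hβ0 hβ1
  have hsum : Summable (fun t : ℕ => β ^ t • (ρ t ⊗ₖ π t)) := by
    refine Summable.of_norm_bounded hgeom fun t => ?_
    rw [norm_smul, Real.norm_eq_abs, abs_pow, abs_of_nonneg hβ0]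
    calc (β ^ t) * ‖ρ t ⊗ₖ π t‖ ≤ β ^ t * 1 := by
          gcongr
          exact density_norm_le_one (isDensity_kron (hρd t) (hπ t))
      _ = β ^ t := mul_one _
  have hsum' : Summable (fun t : ℕ => β ^ t • ρ t) := by
    refine Summable.of_norm_bounded hgeom fun t => ?_
    rw [norm_smul, Real.norm_eq_abs, abs_pow, abs_of_nonneg hβ0]
    calc (β ^ t) * ‖ρ t‖ ≤ β ^ t * 1 := by
          gcongr; exact density_norm_le_one (hρd t)
      _ = β ^ t := mul_one _
  -- continuous linear maps
  let P : Matrix (X × A) (X × A) ℂ →L[ℝ] Matrix X X ℂ :=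
    LinearMap.toContinuousLinearMap (ptraceALM X A)
  let Nc : Matrix (X × A) (X × A) ℂ →L[ℝ] Matrix X X ℂ :=
    LinearMap.toContinuousLinearMap (applyLM N)
  have hP : ∀ M, P M = ptraceA M := fun M => rfl
  have hNc : ∀ M, Nc M = N.apply M := fun M => rfl
  -- ptraceA σ
  have h1 : ptraceA σ = (1 - β) • ∑' t : ℕ, β ^ t • ρ t := by
    rw [hσ, ← hP, _root_.map_smul, ContinuousLinearMap.map_tsum P hsum]
    refine congrArg _ (tsum_congr fun t => ?_)
    show ptraceA (β ^ t • (ρ t ⊗ₖ π t)) = β ^ t • ρ t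
    rw [show ptraceA (β ^ t • (ρ t ⊗ₖ π t)) = β ^ t • ptraceA (ρ t ⊗ₖ π t) from
      (ptraceALM X A).map_smul _ _, ptraceA_kron, (hπ t).2, one_smul]
  -- N.apply σ
  have h2 : N.apply σ = (1 - β) • ∑' t : ℕ, β ^ t • ρ (t + 1) := by
    rw [hσ, ← hNc, _root_.map_smul, ContinuousLinearMap.map_tsum Nc hsum]
    refine congrArg _ (tsum_congr fun t => ?_)
    show N.apply (β ^ t • (ρ t ⊗ₖ π t)) = β ^ t • ρ (t + 1)
    rw [show N.apply (β ^ t • (ρ t ⊗ₖ π t)) = β ^ t • N.apply (ρ t ⊗ₖ π t) from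
      (applyLM N).map_smul _ _, hρ]
    simp only [stateSeq]
  -- shift the series
  have hshift : ∑' t : ℕ, β ^ t • ρ t = ρ 0 + ∑' t : ℕ, β ^ (t + 1) • ρ (t + 1) := by
    simpa using hsum'.tsum_eq_zero_add
  rw [h1, h2, hρ]
  have hβsmul : β • ((1 - β) • ∑' t : ℕ, β ^ t • stateSeq N ρ0 π (t + 1))
      = (1 - β) • ∑' t : ℕ, β ^ (t + 1) • stateSeq N ρ0 π (t + 1) := by
    rw [smul_comm]
    congr 1
    rw [← Summable.tsum_const_smul β (by
      refine Summable.of_norm_bounded hgeom fun t => ?_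
      rw [norm_smul, Real.norm_eq_abs, abs_pow, abs_of_nonneg hβ0]
      calc (β ^ t) * ‖stateSeq N ρ0 π (t + 1)‖ ≤ β ^ t * 1 := by
            gcongr; exact density_norm_le_one (hρd (t + 1))
        _ = β ^ t := mul_one _)]
    congr 1
    ext t
    rw [smul_smul, ← pow_succ']
  rw [hβsmul, ← smul_sub]
  congr 1
  rw [hshift]
  simp [hρ, stateSeq]
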